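/- In ℝ⁴ with the Minkowski form η, for any eight pairwise distinct points A, B, C, D, E, F, G, H: if the fifteen relations η(X-Y, X-Y) = 0 hold for all pairs (X,Y) with X ∈ {A,B,C,D}, Y ∈ {E,F,G,H}, except possibly the pair (D,H), then also η(D-H, D-H) = 0. -/

import Mathlib

set_option maxHeartbeats 1000000
open Matrix

/-- The Minkowski bilinear form on ℝ⁴. -/
def minkowski (a b : Fin 4 → ℝ) : ℝ :=
  -(a 0 * b 0) + a 1 * b 1 + a 2 * b 2 + a 3 * b 3

lemma mink_sub_smul (u n : Fin 4 → ℝ) (t : ℝ) :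
    minkowski (u - t • n) (u - t • n)
      = minkowski u u - 2*t*(minkowski u n) + t^2 * minkowski n n := by
  simp only [minkowski, Pi.sub_apply, Pi.smul_apply, smul_eq_mul]; ring

lemma mink_smul (m : Fin 4 → ℝ) (t : ℝ) :
    minkowski (t • m) (t • m) = t^2 * minkowski m m := by
  simp only [minkowski, Pi.smul_apply, smul_eq_mul]; ring

lemma mink_neg (X Y : Fin 4 → ℝ) :
    minkowski (X - Y) (X - Y) = minkowski (Y - X) (Y - X) := by
  simp only [minkowski, Pi.sub_apply]; ring

lemma null_par (n u : Fin 4 → ℝ) (hn0 : n ≠ 0) (hn : minkowski n n = 0)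
    (hu : minkowski u u = 0) (hun : minkowski u n = 0) : ∃ t : ℝ, u = t • n := by
  simp only [minkowski] at hn hu hun
  have hn00 : n 0 ≠ 0 := by
    intro h0
    apply hn0
    have h1 : n 1 = 0 ∧ n 2 = 0 ∧ n 3 = 0 := by
      refine ⟨?_, ?_, ?_⟩ <;> nlinarith [sq_nonneg (n 1), sq_nonneg (n 2), sq_nonneg (n 3)]
    funext i
    fin_cases i <;> simp [h0, h1.1, h1.2.1, h1.2.2]
  have key : (n 0 * u 1 - u 0 * n 1)^2 + (n 0 * u 2 - u 0 * n 2)^2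
      + (n 0 * u 3 - u 0 * n 3)^2 = 0 := by
    linear_combination (n 0^2) * hu + (u 0^2) * hn - 2*(n 0 * u 0) * hun
  have h1 : n 0 * u 1 - u 0 * n 1 = 0 := by nlinarith [sq_nonneg (n 0 * u 1 - u 0 * n 1), sq_nonneg (n 0 * u 2 - u 0 * n 2), sq_nonneg (n 0 * u 3 - u 0 * n 3)]
  have h2 : n 0 * u 2 - u 0 * n 2 = 0 := by nlinarith [sq_nonneg (n 0 * u 1 - u 0 * n 1), sq_nonneg (n 0 * u 2 - u 0 * n 2), sq_nonneg (n 0 * u 3 - u 0 * n 3)]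
  have h3 : n 0 * u 3 - u 0 * n 3 = 0 := by nlinarith [sq_nonneg (n 0 * u 1 - u 0 * n 1), sq_nonneg (n 0 * u 2 - u 0 * n 2), sq_nonneg (n 0 * u 3 - u 0 * n 3)]
  have hgen : ∀ k : Fin 4, u k * n 0 = u 0 * n k → u k = u 0 / n 0 * n k := by
    intro k hk; field_simp; linarith
  refine ⟨u 0 / n 0, funext fun i => ?_⟩
  simp only [Pi.smul_apply, smul_eq_mul]
  fin_cases i
  · exact hgen 0 (by ring)
  · exact hgen 1 (by linarith)
  · exact hgen 2 (by linarith)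
  · exact hgen 3 (by linarith)

lemma rel2 (α β : ℝ) (X Y : Fin 4 → ℝ) (hs : α + β = 0)
    (hv : α • X + β • Y = 0) (hXY : X ≠ Y) : α = 0 := by
  by_contra hα
  apply hXY
  funext i
  have h := congrFun hv i
  simp only [Pi.add_apply, Pi.smul_apply, Pi.zero_apply, smul_eq_mul] at h
  have h2 : α * (X i - Y i) = 0 := by linear_combination h - Y i * hs
  rcases mul_eq_zero.mp h2 with h3 | h3
  · exact absurd h3 hα
  · linarith

lemma tripleNull (α β γ : ℝ) (X Y Z : Fin 4 → ℝ) (hs : α + β + γ = 0)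
    (hv : α • X + β • Y + γ • Z = 0)
    (hq : α * minkowski X X + β * minkowski Y Y + γ * minkowski Z Z = 0)
    (hα : α ≠ 0) (hβ : β ≠ 0) : minkowski (X - Y) (X - Y) = 0 := by
  have hRA : minkowski (α • X + β • Y + γ • Z) X = 0 := by rw [hv]; simp [minkowski]
  have hRB : minkowski (α • X + β • Y + γ • Z) Y = 0 := by rw [hv]; simp [minkowski]
  have hRC : minkowski (α • X + β • Y + γ • Z) Z = 0 := by rw [hv]; simp [minkowski]
  have key : α * β * minkowski (X - Y) (X - Y) = 0 := by
    simp only [minkowski, Pi.add_apply, Pi.smul_apply, Pi.sub_apply, smul_eq_mul] at hRA hRB hRC hq ⊢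
    linear_combination (-α)*hRA + (-β)*hRB + γ*hRC - γ*hq +
      (α*(-(X 0 * X 0) + X 1 * X 1 + X 2 * X 2 + X 3 * X 3)
        + β*(-(Y 0 * Y 0) + Y 1 * Y 1 + Y 2 * Y 2 + Y 3 * Y 3))*hs
  exact (mul_eq_zero.mp key).resolve_left (mul_ne_zero hα hβ)

def lift (X : Fin 4 → ℝ) : Fin 6 → ℝ := ![1, minkowski X X, X 0, X 1, X 2, X 3]

def tmap (v : Fin 6 → ℝ) : Fin 6 → ℝ := ![v 1, v 0, 2*v 2, -(2*v 3), -(2*v 4), -(2*v 5)]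

lemma dot_lift (X Y : Fin 4 → ℝ) :
    lift X ⬝ᵥ tmap (lift Y) = minkowski (X - Y) (X - Y) := by
  simp only [dotProduct]
  rw [Fin.sum_univ_six]
  show 1 * minkowski Y Y + minkowski X X * 1 + X 0 * (2 * Y 0) + X 1 * -(2 * Y 1)
      + X 2 * -(2 * Y 2) + X 3 * -(2 * Y 3) = _
  simp only [minkowski, Pi.sub_apply]
  ring

lemma dichotomy (A B C D E F G : Fin 4 → ℝ)
    (hAE : minkowski (A - E) (A - E) = 0)
    (hAF : minkowski (A - F) (A - F) = 0)
    (hAG : minkowski (A - G) (A - G) = 0)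
    (hBE : minkowski (B - E) (B - E) = 0)
    (hBF : minkowski (B - F) (B - F) = 0)
    (hBG : minkowski (B - G) (B - G) = 0)
    (hCE : minkowski (C - E) (C - E) = 0)
    (hCF : minkowski (C - F) (C - F) = 0)
    (hCG : minkowski (C - G) (C - G) = 0)
    (hDE : minkowski (D - E) (D - E) = 0)
    (hDF : minkowski (D - F) (D - F) = 0)
    (hDG : minkowski (D - G) (D - G) = 0)
    (h1 : ∀ α β γ δ : ℝ, α + β + γ + δ = 0 → α • A + β • B + γ • C + δ • D = 0 →
      α * minkowski A A + β * minkowski B B + γ * minkowski C C + δ * minkowski D D = 0 →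
      α = 0 ∧ β = 0 ∧ γ = 0 ∧ δ = 0)
    (h2 : ∀ α β γ : ℝ, α + β + γ = 0 → α • E + β • F + γ • G = 0 →
      α * minkowski E E + β * minkowski F F + γ * minkowski G G = 0 →
      α = 0 ∧ β = 0 ∧ γ = 0) : False := by
  set u : Fin 7 → (Fin 6 → ℝ) :=
    ![lift A, lift B, lift C, lift D, tmap (lift E), tmap (lift F), tmap (lift G)] with hu
  have hnli : ¬ LinearIndependent ℝ u := by
    intro hli
    have hle := hli.fintype_card_le_finrank
    rw [Module.finrank_fin_fun] at hle
    simp at hle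
  obtain ⟨g, hg, i0, hi0⟩ := Fintype.not_linearIndependent_iff.mp hnli
  rw [Fin.sum_univ_seven] at hg
  have hu0 : u 0 = lift A := rfl
  have hu1 : u 1 = lift B := rfl
  have hu2 : u 2 = lift C := rfl
  have hu3 : u 3 = lift D := rfl
  have hu4 : u 4 = tmap (lift E) := rfl
  have hu5 : u 5 = tmap (lift F) := rfl
  have hu6 : u 6 = tmap (lift G) := rfl
  rw [hu0, hu1, hu2, hu3, hu4, hu5, hu6] at hg
  obtain ⟨p, hp⟩ : ∃ p : Fin 6 → ℝ, p = g 0 • lift A + g 1 • lift B + g 2 • lift C + g 3 • lift D :=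
    ⟨_, rfl⟩
  obtain ⟨w, hw⟩ : ∃ w : Fin 6 → ℝ, w = g 4 • tmap (lift E) + g 5 • tmap (lift F) + g 6 • tmap (lift G) :=
    ⟨_, rfl⟩
  have hpw : p + w = 0 := by rw [hp, hw, ← hg]; abel
  have hdot : p ⬝ᵥ w = 0 := by
    rw [hp, hw]
    simp only [add_dotProduct, smul_dotProduct, dotProduct_add, dotProduct_smul,
      dot_lift, hAE, hAF, hAG, hBE, hBF, hBG, hCE, hCF, hCG, hDE, hDF, hDG,
      smul_eq_mul, mul_zero]
    ring
  have hp0 : p = 0 := by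
    have hwp : w = -p := by
      have := congrArg (fun z => z - p) hpw
      simpa [add_sub_cancel_left] using eq_neg_of_add_eq_zero_right hpw
    rw [hwp, dotProduct_neg, neg_eq_zero] at hdot
    exact dotProduct_self_eq_zero.mp hdot
  have hw0 : w = 0 := by rw [hp0, zero_add] at hpw; exact hpw
  -- extract relations for A B C D
  have e0 := congrFun hp0 0
  have e1 := congrFun hp0 1
  have e2 := congrFun hp0 2
  have e3 := congrFun hp0 3
  have e4 := congrFun hp0 4
  have e5 := congrFun hp0 5
  simp only [hp, Pi.add_apply, Pi.smul_apply, Pi.zero_apply, smul_eq_mul] at e0 e1 e2 e3 e4 e5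
  rw [show lift A 0 = 1 from rfl, show lift B 0 = 1 from rfl, show lift C 0 = 1 from rfl,
    show lift D 0 = 1 from rfl] at e0
  rw [show lift A 1 = minkowski A A from rfl, show lift B 1 = minkowski B B from rfl,
    show lift C 1 = minkowski C C from rfl, show lift D 1 = minkowski D D from rfl] at e1
  rw [show lift A 2 = A 0 from rfl, show lift B 2 = B 0 from rfl,
    show lift C 2 = C 0 from rfl, show lift D 2 = D 0 from rfl] at e2
  rw [show lift A 3 = A 1 from rfl, show lift B 3 = B 1 from rfl,
    show lift C 3 = C 1 from rfl, show lift D 3 = D 1 from rfl] at e3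
  rw [show lift A 4 = A 2 from rfl, show lift B 4 = B 2 from rfl,
    show lift C 4 = C 2 from rfl, show lift D 4 = D 2 from rfl] at e4
  rw [show lift A 5 = A 3 from rfl, show lift B 5 = B 3 from rfl,
    show lift C 5 = C 3 from rfl, show lift D 5 = D 3 from rfl] at e5
  have hvecA : g 0 • A + g 1 • B + g 2 • C + g 3 • D = 0 := by
    funext i
    simp only [Pi.add_apply, Pi.smul_apply, Pi.zero_apply, smul_eq_mul]
    fin_cases i
    · show g 0 * A 0 + g 1 * B 0 + g 2 * C 0 + g 3 * D 0 = 0; linarith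
    · show g 0 * A 1 + g 1 * B 1 + g 2 * C 1 + g 3 * D 1 = 0; linarith
    · show g 0 * A 2 + g 1 * B 2 + g 2 * C 2 + g 3 * D 2 = 0; linarith
    · show g 0 * A 3 + g 1 * B 3 + g 2 * C 3 + g 3 * D 3 = 0; linarith
  obtain ⟨hg0, hg1, hg2, hg3⟩ := h1 (g 0) (g 1) (g 2) (g 3) (by linarith) hvecA (by linarith)
  -- extract relations for E F G
  have f0 := congrFun hw0 0
  have f1 := congrFun hw0 1
  have f2 := congrFun hw0 2
  have f3 := congrFun hw0 3
  have f4 := congrFun hw0 4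
  have f5 := congrFun hw0 5
  simp only [hw, Pi.add_apply, Pi.smul_apply, Pi.zero_apply, smul_eq_mul] at f0 f1 f2 f3 f4 f5
  rw [show tmap (lift E) 0 = minkowski E E from rfl, show tmap (lift F) 0 = minkowski F F from rfl,
    show tmap (lift G) 0 = minkowski G G from rfl] at f0
  rw [show tmap (lift E) 1 = 1 from rfl, show tmap (lift F) 1 = 1 from rfl,
    show tmap (lift G) 1 = 1 from rfl] at f1
  rw [show tmap (lift E) 2 = 2 * E 0 from rfl, show tmap (lift F) 2 = 2 * F 0 from rfl,
    show tmap (lift G) 2 = 2 * G 0 from rfl] at f2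
  rw [show tmap (lift E) 3 = -(2 * E 1) from rfl, show tmap (lift F) 3 = -(2 * F 1) from rfl,
    show tmap (lift G) 3 = -(2 * G 1) from rfl] at f3
  rw [show tmap (lift E) 4 = -(2 * E 2) from rfl, show tmap (lift F) 4 = -(2 * F 2) from rfl,
    show tmap (lift G) 4 = -(2 * G 2) from rfl] at f4
  rw [show tmap (lift E) 5 = -(2 * E 3) from rfl, show tmap (lift F) 5 = -(2 * F 3) from rfl,
    show tmap (lift G) 5 = -(2 * G 3) from rfl] at f5
  have hvecE : g 4 • E + g 5 • F + g 6 • G = 0 := by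
    funext i
    simp only [Pi.add_apply, Pi.smul_apply, Pi.zero_apply, smul_eq_mul]
    fin_cases i
    · show g 4 * E 0 + g 5 * F 0 + g 6 * G 0 = 0; linarith
    · show g 4 * E 1 + g 5 * F 1 + g 6 * G 1 = 0; linarith
    · show g 4 * E 2 + g 5 * F 2 + g 6 * G 2 = 0; linarith
    · show g 4 * E 3 + g 5 * F 3 + g 6 * G 3 = 0; linarith
  obtain ⟨hg4, hg5, hg6⟩ := h2 (g 4) (g 5) (g 6) (by linarith) hvecE (by linarith)
  fin_cases i0
  · exact hi0 hg0
  · exact hi0 hg1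
  · exact hi0 hg2
  · exact hi0 hg3
  · exact hi0 hg4
  · exact hi0 hg5
  · exact hi0 hg6

theorem stmt_3 (A B C D E F G H : Fin 4 → ℝ)
    (hdist : List.Pairwise (· ≠ ·) [A, B, C, D, E, F, G, H])
    (hAE : minkowski (A - E) (A - E) = 0)
    (hAF : minkowski (A - F) (A - F) = 0)
    (hAG : minkowski (A - G) (A - G) = 0)
    (hAH : minkowski (A - H) (A - H) = 0)
    (hBE : minkowski (B - E) (B - E) = 0)
    (hBF : minkowski (B - F) (B - F) = 0)
    (hBG : minkowski (B - G) (B - G) = 0)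
    (hBH : minkowski (B - H) (B - H) = 0)
    (hCE : minkowski (C - E) (C - E) = 0)
    (hCF : minkowski (C - F) (C - F) = 0)
    (hCG : minkowski (C - G) (C - G) = 0)
    (hCH : minkowski (C - H) (C - H) = 0)
    (hDE : minkowski (D - E) (D - E) = 0)
    (hDF : minkowski (D - F) (D - F) = 0)
    (hDG : minkowski (D - G) (D - G) = 0) :
    minkowski (D - H) (D - H) = 0 := by
  simp only [List.pairwise_cons, List.mem_cons, List.not_mem_nil, List.mem_singleton,
    forall_eq_or_imp, forall_eq] at hdist
  obtain ⟨⟨dAB, dAC, dAD, dAE', dAF', dAG', dAH'⟩, ⟨dBC, dBD, dBE', dBF', dBG', dBH'⟩,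
    ⟨dCD, dCE', dCF', dCG', dCH'⟩, ⟨dDE', dDF', dDG', dDH'⟩, ⟨dEF, dEG, dEH'⟩,
    ⟨dFG, dFH'⟩, dGH, -⟩ := hdist
  by_cases h1 : ∀ α β γ δ : ℝ, α + β + γ + δ = 0 → α • A + β • B + γ • C + δ • D = 0 →
      α * minkowski A A + β * minkowski B B + γ * minkowski C C + δ * minkowski D D = 0 →
      α = 0 ∧ β = 0 ∧ γ = 0 ∧ δ = 0
  · by_cases h2 : ∀ α β γ : ℝ, α + β + γ = 0 → α • E + β • F + γ • G = 0 →
        α * minkowski E E + β * minkowski F F + γ * minkowski G G = 0 →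
        α = 0 ∧ β = 0 ∧ γ = 0
    · exact (dichotomy A B C D E F G hAE hAF hAG hBE hBF hBG hCE hCF hCG hDE hDF hDG h1 h2).elim
    · -- E, F, G lie on a common null line
      push_neg at h2
      obtain ⟨α, β, γ, hs, hv, hq, hne⟩ := h2
      have hα : α ≠ 0 := by
        intro h0
        have hv' : β • F + γ • G = 0 := by rw [h0] at hv; simpa using hv
        have hβ0 : β = 0 := rel2 β γ F G (by linarith) hv' dFG
        exact hne h0 hβ0 (by linarith)
      have hβ : β ≠ 0 := by
        intro h0
        have hv' : α • E + γ • G = 0 := by rw [h0] at hv; simpa using hv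
        exact hα (rel2 α γ E G (by linarith) hv' dEG)
      have hEFn : minkowski (E - F) (E - F) = 0 := tripleNull α β γ E F G hs hv hq hα hβ
      have hm0 : F - E ≠ 0 := sub_ne_zero.mpr (Ne.symm dEF)
      have hmn : minkowski (F - E) (F - E) = 0 := by rw [mink_neg]; exact hEFn
      have line : ∀ X : Fin 4 → ℝ, minkowski (X - E) (X - E) = 0 →
          minkowski (X - F) (X - F) = 0 → ∃ t : ℝ, X - E = t • (F - E) := by
        intro X hx1 hx2
        have hXF : X - F = (X - E) - (1:ℝ) • (F - E) := by rw [one_smul]; abel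
        rw [hXF, mink_sub_smul, hx1, hmn] at hx2
        simp only [mul_zero, add_zero] at hx2
        have hP : minkowski (X - E) (F - E) = 0 := by linarith
        exact null_par (F - E) (X - E) hm0 hmn hx1 hP
      obtain ⟨tA, htA⟩ := line A hAE hAF
      obtain ⟨tB, htB⟩ := line B hBE hBF
      obtain ⟨tD, htD⟩ := line D hDE hDF
      have htAB : tA ≠ tB := by
        intro h
        apply dAB
        have h' : A - E = B - E := by rw [htA, htB, h]
        exact sub_left_inj.mp h'
      have hHA : minkowski (H - A) (H - A) = 0 := by rw [mink_neg]; exact hAH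
      have hHB : minkowski (H - B) (H - B) = 0 := by rw [mink_neg]; exact hBH
      have hHA' : H - A = (H - E) - tA • (F - E) := by rw [← htA]; abel
      have hHB' : H - B = (H - E) - tB • (F - E) := by rw [← htB]; abel
      rw [hHA', mink_sub_smul, hmn] at hHA
      rw [hHB', mink_sub_smul, hmn] at hHB
      simp only [mul_zero, add_zero] at hHA hHB
      have hP : minkowski (H - E) (F - E) = 0 := by
        rcases mul_eq_zero.mp (show (tA - tB) * minkowski (H - E) (F - E) = 0 by linarith)
          with h | h
        · exact absurd (sub_eq_zero.mp h) htAB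
        · exact h
      rw [hP] at hHA
      simp only [mul_zero, sub_zero] at hHA
      have hQH : minkowski (H - E) (H - E) = 0 := hHA
      obtain ⟨tH, htH⟩ := null_par (F - E) (H - E) hm0 hmn hQH hP
      have hDH : D - H = (tD - tH) • (F - E) := by rw [sub_smul, ← htD, ← htH]; abel
      rw [hDH, mink_smul, hmn, mul_zero]
  · push_neg at h1
    obtain ⟨α, β, γ, δ, hs, hv, hq, hne⟩ := h1
    by_cases hδ : δ = 0
    · -- A, B, C lie on a common null line
      subst hδ
      have hv' : α • A + β • B + γ • C = 0 := by simpa using hv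
      have hs' : α + β + γ = 0 := by linarith
      have hq' : α * minkowski A A + β * minkowski B B + γ * minkowski C C = 0 := by linarith
      have hα : α ≠ 0 := by
        intro h0
        have hv'' : β • B + γ • C = 0 := by rw [h0] at hv'; simpa using hv'
        have hβ0 : β = 0 := rel2 β γ B C (by linarith) hv'' dBC
        exact hne h0 hβ0 (by linarith) rfl
      have hβ : β ≠ 0 := by
        intro h0
        have hv'' : α • A + γ • C = 0 := by rw [h0] at hv'; simpa using hv'
        exact hα (rel2 α γ A C (by linarith) hv'' dAC)
      have hABn : minkowski (A - B) (A - B) = 0 := tripleNull α β γ A B C hs' hv' hq' hα hβ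
      have hn0 : B - A ≠ 0 := sub_ne_zero.mpr (Ne.symm dAB)
      have hnn : minkowski (B - A) (B - A) = 0 := by rw [mink_neg]; exact hABn
      have line : ∀ Y : Fin 4 → ℝ, minkowski (Y - A) (Y - A) = 0 →
          minkowski (Y - B) (Y - B) = 0 → ∃ t : ℝ, Y - A = t • (B - A) := by
        intro Y hy1 hy2
        have hYB : Y - B = (Y - A) - (1:ℝ) • (B - A) := by rw [one_smul]; abel
        rw [hYB, mink_sub_smul, hy1, hnn] at hy2
        simp only [mul_zero, add_zero] at hy2
        have hP : minkowski (Y - A) (B - A) = 0 := by linarith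
        exact null_par (B - A) (Y - A) hn0 hnn hy1 hP
      obtain ⟨tE, htE⟩ := line E (by rw [mink_neg]; exact hAE) (by rw [mink_neg]; exact hBE)
      obtain ⟨tF, htF⟩ := line F (by rw [mink_neg]; exact hAF) (by rw [mink_neg]; exact hBF)
      obtain ⟨tH, htH⟩ := line H (by rw [mink_neg]; exact hAH) (by rw [mink_neg]; exact hBH)
      have htEF : tE ≠ tF := by
        intro h
        apply dEF
        have h' : E - A = F - A := by rw [htE, htF, h]
        exact sub_left_inj.mp h'
      have hDE' : D - E = (D - A) - tE • (B - A) := by rw [← htE]; abel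
      have hDF' : D - F = (D - A) - tF • (B - A) := by rw [← htF]; abel
      rw [hDE', mink_sub_smul, hnn] at hDE
      rw [hDF', mink_sub_smul, hnn] at hDF
      simp only [mul_zero, add_zero] at hDE hDF
      have hP : minkowski (D - A) (B - A) = 0 := by
        rcases mul_eq_zero.mp (show (tE - tF) * minkowski (D - A) (B - A) = 0 by linarith)
          with h | h
        · exact absurd (sub_eq_zero.mp h) htEF
        · exact h
      rw [hP] at hDE
      simp only [mul_zero, sub_zero] at hDE
      have hQD : minkowski (D - A) (D - A) = 0 := hDE
      have hDH : D - H = (D - A) - tH • (B - A) := by rw [← htH]; abel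
      rw [hDH, mink_sub_smul, hnn]
      rw [hP, hQD]
      ring
    · -- D is an affine combination of A, B, C
      obtain ⟨a', ha'⟩ : ∃ x : ℝ, x = -(α/δ) := ⟨_, rfl⟩
      obtain ⟨b', hb'⟩ : ∃ x : ℝ, x = -(β/δ) := ⟨_, rfl⟩
      obtain ⟨c', hc'⟩ : ∃ x : ℝ, x = -(γ/δ) := ⟨_, rfl⟩
      have hs1 : a' + b' + c' = 1 := by
        rw [ha', hb', hc']; field_simp; linear_combination (-1) * hs
      have hqD : minkowski D D = a' * minkowski A A + b' * minkowski B B + c' * minkowski C C := by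
        rw [ha', hb', hc']; field_simp; linear_combination (1) * hq
      have hDeq : D = a' • A + b' • B + c' • C := by
        funext i
        have hvi := congrFun hv i
        simp only [Pi.add_apply, Pi.smul_apply, Pi.zero_apply, smul_eq_mul] at hvi
        simp only [Pi.add_apply, Pi.smul_apply, smul_eq_mul]
        rw [ha', hb', hc']
        field_simp
        linear_combination (1) * hvi
      rw [hDeq] at hqD ⊢
      simp only [minkowski, Pi.add_apply, Pi.sub_apply, Pi.smul_apply, smul_eq_mul] at hqD hAH hBH hCH ⊢
      linear_combination hqD + a' * hAH + b' * hBH + c' * hCH -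
        (-(H 0 * H 0) + H 1 * H 1 + H 2 * H 2 + H 3 * H 3) * hs1
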